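/- Let U(t) = σ²(θ*)²·(1 - ησ²)^{2t} + (s²/n)·(1 - (1 - ησ²)^t)² viewed as a function of real t ≥ 0, with 0 < ησ² < 1, θ* ≠ 0, s² > 0. Then U is minimized exactly at the value of t for which (1 - ησ²)^t = (s²/n)/(σ²(θ*)² + s²/n), i.e., the derivative of U vanishes there and U is decreasing before and increasing after this point. -/

import Mathlib

open Real Set

set_option maxHeartbeats 1000000 in
theorem stmt_2 (σ η θstar s2 n : ℝ) (hσ : 0 < σ) (hη : 0 < η * σ ^ 2)
    (hη1 : η * σ ^ 2 < 1) (hθ : θstar ≠ 0) (hs2 : 0 < s2) (hn : 1 ≤ n)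
    (U : ℝ → ℝ)
    (hU : ∀ t : ℝ, U t =
      σ ^ 2 * θstar ^ 2 * (1 - η * σ ^ 2) ^ (2 * t) +
        (s2 / n) * (1 - (1 - η * σ ^ 2) ^ t) ^ 2) :
    ∃ t0 : ℝ, 0 ≤ t0 ∧
      (1 - η * σ ^ 2) ^ t0 = (s2 / n) / (σ ^ 2 * θstar ^ 2 + s2 / n) ∧
      deriv U t0 = 0 ∧
      StrictAntiOn U (Icc 0 t0) ∧
      StrictMonoOn U (Ici t0) ∧
      ∀ t : ℝ, 0 ≤ t → t ≠ t0 → U t0 < U t := by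
  have hn0 : (0:ℝ) < n := lt_of_lt_of_le one_pos hn
  set r : ℝ := 1 - η * σ ^ 2 with hrdef
  have hr0 : 0 < r := by simp only [hrdef]; linarith
  have hr1 : r < 1 := by simp only [hrdef]; linarith
  set A : ℝ := σ ^ 2 * θstar ^ 2 with hAdef
  have hA : 0 < A := by positivity
  set B : ℝ := s2 / n with hBdef
  have hB : 0 < B := by positivity
  set xs : ℝ := B / (A + B) with hxsdef
  have hAB : 0 < A + B := by positivity
  have hxs0 : 0 < xs := by positivity
  have hxs1 : xs < 1 := by
    rw [hxsdef, div_lt_one hAB]; linarith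
  have hxsB : (A + B) * xs = B := by
    rw [hxsdef]; field_simp
  have hL : Real.log r < 0 := Real.log_neg hr0 hr1
  have hlogxs : Real.log xs < 0 := Real.log_neg hxs0 hxs1
  set t0 : ℝ := Real.log xs / Real.log r with ht0def
  have ht00 : 0 ≤ t0 := le_of_lt (div_pos_of_neg_of_neg hlogxs hL)
  have hrt0 : r ^ t0 = xs := by
    rw [ht0def, Real.rpow_def_of_pos hr0, mul_div_cancel₀ _ (ne_of_lt hL),
      Real.exp_log hxs0]
  have hrtpos : ∀ t : ℝ, 0 < r ^ t := fun t => Real.rpow_pos_of_pos hr0 t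
  have hUeq : ∀ t : ℝ, U t = (A + B) * (r ^ t) ^ 2 - 2 * B * (r ^ t) + B := by
    intro t
    rw [hU t]
    have h2 : r ^ (2 * t) = (r ^ t) ^ 2 := by
      rw [two_mul, Real.rpow_add hr0, sq]
    rw [h2]; ring
  have hdiff : ∀ a b : ℝ, U b - U a =
      (r ^ b - r ^ a) * ((A + B) * (r ^ a + r ^ b) - 2 * B) := by
    intro a b; rw [hUeq a, hUeq b]; ring
  have hdec : ∀ a b : ℝ, a < b → r ^ b < r ^ a := fun a b h =>
    Real.rpow_lt_rpow_of_exponent_gt hr0 hr1 h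
  have hanti : StrictAntiOn U (Icc 0 t0) := by
    intro a ha b hb hab
    have h1 : r ^ b < r ^ a := hdec a b hab
    have h2 : xs ≤ r ^ b := by
      rcases eq_or_lt_of_le hb.2 with h | h
      · rw [h, hrt0]
      · exact le_of_lt (hrt0 ▸ hdec b t0 h)
    have hd := hdiff b a
    have hfac : 0 < (A + B) * (r ^ b + r ^ a) - 2 * B := by
      nlinarith [mul_pos hAB (show (0:ℝ) < r ^ a + r ^ b - 2 * xs by linarith)]
    nlinarith [mul_pos (show (0:ℝ) < r ^ a - r ^ b by linarith) hfac]
  have hmono : StrictMonoOn U (Ici t0) := by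
    intro a ha b hb hab
    have h1 : r ^ b < r ^ a := hdec a b hab
    have h2 : r ^ a ≤ xs := by
      rcases eq_or_lt_of_le (mem_Ici.mp ha) with h | h
      · rw [← h, hrt0]
      · exact le_of_lt (hrt0 ▸ hdec t0 a h)
    have hd := hdiff a b
    have hfac : (A + B) * (r ^ a + r ^ b) - 2 * B < 0 := by
      nlinarith [mul_pos hAB (show (0:ℝ) < 2 * xs - (r ^ a + r ^ b) by linarith)]
    nlinarith [mul_pos (show (0:ℝ) < r ^ a - r ^ b by linarith)
      (show (0:ℝ) < 2 * B - (A + B) * (r ^ a + r ^ b) by linarith)]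
  have hderiv : deriv U t0 = 0 := by
    have hfun : U = fun t : ℝ => A * r ^ (2 * t) + B * (1 - r ^ t) ^ 2 :=
      funext fun t => hU t
    have hd1 : HasDerivAt (fun t : ℝ => r ^ t) (r ^ t0 * Real.log r) t0 :=
      (hasStrictDerivAt_const_rpow hr0 t0).hasDerivAt
    have hd2 : HasDerivAt (fun t : ℝ => r ^ (2 * t))
        (r ^ (2 * t0) * Real.log r * 2) t0 := by
      have h := ((hasStrictDerivAt_const_rpow hr0 (2 * t0)).hasDerivAt).comp t0
        ((hasDerivAt_id t0).const_mul 2)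
      have heq : (fun t : ℝ => r ^ (2 * t)) =
          (fun x : ℝ => r ^ x) ∘ (fun t : ℝ => 2 * id t) := rfl
      rw [heq]
      exact h.congr_deriv (by ring)
    have hd3 : HasDerivAt (fun t : ℝ => 1 - r ^ t) (-(r ^ t0 * Real.log r)) t0 := by
      exact ((hasDerivAt_const t0 (1:ℝ)).sub hd1).congr_deriv (by ring)
    have hd4 : HasDerivAt (fun t : ℝ => (1 - r ^ t) ^ 2)
        (2 * (1 - r ^ t0) ^ 1 * (-(r ^ t0 * Real.log r))) t0 := hd3.pow 2
    have hdU : HasDerivAt U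
        (A * (r ^ (2 * t0) * Real.log r * 2) +
          B * (2 * (1 - r ^ t0) ^ 1 * (-(r ^ t0 * Real.log r)))) t0 := by
      rw [hfun]
      exact (hd2.const_mul A).add (hd4.const_mul B)
    rw [hdU.deriv]
    have h2 : r ^ (2 * t0) = (r ^ t0) ^ 2 := by
      rw [two_mul, Real.rpow_add hr0, sq]
    rw [h2, hrt0]
    linear_combination (2 * Real.log r * xs) * hxsB
  refine ⟨t0, ht00, hrt0, hderiv, hanti, hmono, ?_⟩
  intro t ht htne
  rcases lt_or_gt_of_ne htne with h | h
  · exact hanti ⟨ht, le_of_lt h⟩ ⟨ht00, le_refl t0⟩ h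
  · exact hmono (mem_Ici.mpr (le_refl t0)) (mem_Ici.mpr (le_of_lt h)) h
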